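/- Let H be a real separable Hilbert space with Hilbert basis (ν_k)_{k∈ℕ}, let d, N ∈ ℕ with N ≥ 1, let v_1, …, v_N ∈ H, let 𝒽 : H → ℝ^d be any function, and let S : ℝ^d → ℝ^d be a linear map. With E^N[v] := (1/N)∑_{i=1}^N v_i, E^N_𝒽[v] := (1/N)∑_{i=1}^N 𝒽(v_i), and C^N_𝒽[v] : ℝ^d → H the continuous linear map y ↦ (1/N)∑_{i=1}^N ⟨𝒽(v_i) − E^N_𝒽[v], y⟩ (v_i − E^N[v]), one has (1/N)∑_{i=1}^N ⟨v_i − E^N[v], C^N_𝒽[v] (S (𝒽(v_i) − E^N_𝒽[v]))⟩ = ∑'_{k} ⟨ν_k, C^N_𝒽[v] (S ((C^N_𝒽[v])* ν_k))⟩, where (C^N_𝒽[v])* denotes the Hilbert-space adjoint of C^N_𝒽[v]. -/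

import Mathlib

open RealInnerProductSpace

/-- The empirical mean `E^N[v] = (1/N) ∑ᵢ vᵢ` of an ensemble. -/
noncomputable def empMean {H : Type*} [NormedAddCommGroup H] [InnerProductSpace ℝ H]
    {N : ℕ} (v : Fin N → H) : H :=
  (N : ℝ)⁻¹ • ∑ i, v i

/-- The empirical observed mean `E^N_𝒽[v] = (1/N) ∑ᵢ 𝒽(vᵢ)`. -/
noncomputable def empObsMean {H : Type*} [NormedAddCommGroup H] [InnerProductSpace ℝ H]
    {d N : ℕ} (v : Fin N → H) (g : H → EuclideanSpace ℝ (Fin d)) :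
    EuclideanSpace ℝ (Fin d) :=
  (N : ℝ)⁻¹ • ∑ i, g (v i)

/-- The empirical covariance `C^N_𝒽[v] : ℝ^d → H`,
`y ↦ (1/N) ∑ᵢ ⟨𝒽(vᵢ) − E^N_𝒽[v], y⟩ (vᵢ − E^N[v])`. -/
noncomputable def empCov {H : Type*} [NormedAddCommGroup H] [InnerProductSpace ℝ H]
    {d N : ℕ} (v : Fin N → H) (g : H → EuclideanSpace ℝ (Fin d)) :
    EuclideanSpace ℝ (Fin d) →L[ℝ] H :=
  (N : ℝ)⁻¹ • ∑ i : Fin N,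
    (innerSL ℝ (g (v i) - empObsMean v g)).smulRight (v i - empMean v)

/-- Parseval identity for the EnKBF contraction term:
`(1/N) ∑ᵢ ⟨vᵢ − E^N[v], C^N_𝒽[v] (S (𝒽(vᵢ) − E^N_𝒽[v]))⟩
  = ∑'_k ⟨ν_k, C^N_𝒽[v] (S ((C^N_𝒽[v])* ν_k))⟩`. -/
theorem empCov_parseval_trace
    {H : Type*} [NormedAddCommGroup H] [InnerProductSpace ℝ H] [CompleteSpace H]
    (ν : HilbertBasis ℕ ℝ H) {d N : ℕ} (hN : 1 ≤ N)
    (v : Fin N → H) (g : H → EuclideanSpace ℝ (Fin d))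
    (S : EuclideanSpace ℝ (Fin d) →L[ℝ] EuclideanSpace ℝ (Fin d)) :
    (N : ℝ)⁻¹ * ∑ i : Fin N,
        (⟪v i - empMean v, empCov v g (S (g (v i) - empObsMean v g))⟫ : ℝ)
      = ∑' k : ℕ,
        (⟪ν k, empCov v g (S ((ContinuousLinearMap.adjoint (empCov v g)) (ν k)))⟫ : ℝ) := by
  classical
  set a : Fin N → EuclideanSpace ℝ (Fin d) := fun i => g (v i) - empObsMean v g with ha
  set b : Fin N → H := fun i => v i - empMean v with hb
  set C := empCov v g with hCdef
  have hC : ∀ y, C y = (N : ℝ)⁻¹ • ∑ i, (⟪a i, y⟫ : ℝ) • b i := by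
    intro y
    simp only [hCdef, empCov, ContinuousLinearMap.smul_apply,
      ContinuousLinearMap.sum_apply, ContinuousLinearMap.smulRight_apply, innerSL_apply_apply]
    rfl
  have hadj : ∀ x : H, (ContinuousLinearMap.adjoint C) x
      = (N : ℝ)⁻¹ • ∑ j, (⟪b j, x⟫ : ℝ) • a j := by
    intro x
    refine ext_inner_right ℝ fun y => ?_
    rw [ContinuousLinearMap.adjoint_inner_left, hC]
    simp only [inner_smul_left, inner_smul_right, sum_inner, inner_sum,
      RCLike.conj_to_real, conj_trivial]
    congr 1
    refine Finset.sum_congr rfl fun i _ => ?_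
    rw [real_inner_comm x (b i)]
    ring
  have hterm : ∀ k, (⟪ν k, C (S ((ContinuousLinearMap.adjoint C) (ν k)))⟫ : ℝ)
      = (N : ℝ)⁻¹ * ∑ j, (⟪b j, ν k⟫ : ℝ) * ⟪ν k, C (S (a j))⟫ := by
    intro k
    rw [hadj, map_smul, map_smul, map_sum, map_sum, inner_smul_right, inner_sum]
    simp only [map_smul, inner_smul_right, Finset.mul_sum]
  calc (N : ℝ)⁻¹ * ∑ i : Fin N, (⟪b i, C (S (a i))⟫ : ℝ)
      = (N : ℝ)⁻¹ * ∑ j, ∑' k, (⟪b j, ν k⟫ : ℝ) * ⟪ν k, C (S (a j))⟫ := by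
        congr 1
        exact Finset.sum_congr rfl fun j _ => (ν.tsum_inner_mul_inner (b j) (C (S (a j)))).symm
    _ = ∑' k, (N : ℝ)⁻¹ * ∑ j, (⟪b j, ν k⟫ : ℝ) * ⟪ν k, C (S (a j))⟫ := by
        rw [← Summable.tsum_finsetSum (fun j _ => ν.summable_inner_mul_inner (b j) (C (S (a j)))),
          tsum_mul_left]
    _ = ∑' k, (⟪ν k, C (S ((ContinuousLinearMap.adjoint C) (ν k)))⟫ : ℝ) :=
        (tsum_congr fun k => (hterm k).symm)
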